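/- Any weight configuration W that maximizes φ^tot(W) (i.e., achieves φ^tot(W) = 1) has at most |V_1| + |V_K| + K − 3 non-zero weights, provided K > 2. -/
import Mathlib


open Finset

/-- Contiguity of an edge sequence: consecutive edges share endpoints. -/
def Contig (K : ℕ) (γ : Fin (K-1) → ℕ × ℕ) : Prop :=
  ∀ k : Fin (K-1), ∀ h : k.val + 1 < K - 1, (γ k).2 = (γ ⟨k.val + 1, h⟩).1

instance (K : ℕ) (γ : Fin (K-1) → ℕ × ℕ) : Decidable (Contig K γ) := by
  unfold Contig; infer_instance

/-- Total connectivity: sum over all contiguous input-to-output edge sequences of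
the product of edge weights. -/
noncomputable def phiTot (K : ℕ) (E : ℕ → Finset (ℕ × ℕ)) (θ : ℕ → ℕ → ℕ → ℝ) : ℝ :=
  ∑ γ ∈ (Fintype.piFinset (fun k : Fin (K-1) => E k.val)).filter (fun γ => Contig K γ),
    ∏ k : Fin (K-1), θ k.val (γ k).1 (γ k).2

/-- Total absolute weight of layer k. -/
noncomputable def Snorm (E : ℕ → Finset (ℕ × ℕ)) (W : ℕ → ℕ → ℕ → ℝ) (k : ℕ) : ℝ :=
  ∑ e ∈ E k, |W k e.1 e.2|

/-- Per-layer normalized weights. -/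
noncomputable def thetaNorm (E : ℕ → Finset (ℕ × ℕ)) (W : ℕ → ℕ → ℕ → ℝ)
    (k i j : ℕ) : ℝ :=
  |W k i j| / Snorm E W k

/-- Connectivity from the input layer to node `r` in layer `l`. -/
noncomputable def aIn (E : ℕ → Finset (ℕ × ℕ)) (θ : ℕ → ℕ → ℕ → ℝ) (l r : ℕ) : ℝ :=
  ∑ γ ∈ (Fintype.piFinset (fun k : Fin l => E k.val)).filter
      (fun γ => (∀ k : Fin l, ∀ h : k.val + 1 < l, (γ k).2 = (γ ⟨k.val + 1, h⟩).1)
        ∧ ∀ h : 0 < l, (γ ⟨l - 1, by omega⟩).2 = r),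
    ∏ k : Fin l, θ k.val (γ k).1 (γ k).2

/-- Connectivity from node `r` in layer `l` to the output layer (layer K-1). -/
noncomputable def aOut (K : ℕ) (E : ℕ → Finset (ℕ × ℕ)) (θ : ℕ → ℕ → ℕ → ℝ)
    (l r : ℕ) : ℝ :=
  ∑ γ ∈ (Fintype.piFinset (fun k : Fin (K - 1 - l) => E (l + k.val))).filter
      (fun γ => (∀ k : Fin (K - 1 - l), ∀ h : k.val + 1 < K - 1 - l,
          (γ k).2 = (γ ⟨k.val + 1, h⟩).1)
        ∧ ∀ h : 0 < K - 1 - l, (γ ⟨0, h⟩).1 = r),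
    ∏ k : Fin (K - 1 - l), θ (l + k.val) (γ k).1 (γ k).2

/-- a maximizer of φ^tot (φ^tot = 1) has at most
|V₁| + |V_K| + K − 3 non-zero weights (fully-connected layered net, K > 2). -/
lemma aux_sum_iv (M A B : ℕ) :
    ∑ k ∈ Finset.range (M+2), (if k = 0 then A else if k = M+1 then B else 1)
      = A + B + M := by
  rw [Finset.sum_range_succ, Finset.sum_range_succ']
  have h1 : ∀ i ∈ Finset.range M,
      (if i+1 = 0 then A else if i+1 = M+1 then B else 1) = 1 := by
    intro i hi
    rw [Finset.mem_range] at hi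
    rw [if_neg (by omega), if_neg (by omega)]
  rw [Finset.sum_congr rfl h1, Finset.sum_const, smul_eq_mul, mul_one,
    Finset.card_range, if_pos rfl, if_neg (Nat.succ_ne_zero M), if_pos rfl]
  omega

theorem maximizer_sparsity
    (K : ℕ) (hK : 2 < K) (n : ℕ → ℕ) (E : ℕ → Finset (ℕ × ℕ))
    (W : ℕ → ℕ → ℕ → ℝ)
    (hE : ∀ k, k < K - 1 → E k = (Finset.range (n k)) ×ˢ (Finset.range (n (k+1))))
    (hS : ∀ k, k < K - 1 → 0 < Snorm E W k)
    (hmax : phiTot K E (thetaNorm E W) = 1) :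
    ∑ k ∈ Finset.range (K-1), ((E k).filter (fun e => W k e.1 e.2 ≠ 0)).card
      ≤ n 0 + n (K-1) + (K - 3) := by
  classical
  have hθ0 : ∀ k i j, 0 ≤ thetaNorm E W k i j := fun k i j =>
    div_nonneg (abs_nonneg _) (Finset.sum_nonneg fun e _ => abs_nonneg _)
  have hsum1 : ∀ k : Fin (K-1), ∑ e ∈ E k.val, thetaNorm E W k.val e.1 e.2 = 1 := by
    intro k
    have hk := hS k.val k.isLt
    unfold thetaNorm
    rw [← Finset.sum_div]
    exact div_self (ne_of_gt hk)
  have htotal : ∑ γ ∈ Fintype.piFinset (fun k : Fin (K-1) => E k.val),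
      ∏ k : Fin (K-1), thetaNorm E W k.val (γ k).1 (γ k).2 = 1 := by
    have hps := Finset.prod_univ_sum (κ := fun _ : Fin (K-1) => ℕ × ℕ)
      (fun k => E k.val) (fun k e => thetaNorm E W k.val e.1 e.2)
    rw [← hps]
    simp [hsum1]
  have hzero : ∀ γ ∈ Fintype.piFinset (fun k : Fin (K-1) => E k.val),
      ¬ Contig K γ → ∏ k : Fin (K-1), thetaNorm E W k.val (γ k).1 (γ k).2 = 0 := by
    intro γ hγ hnc
    have hsplit := Finset.sum_filter_add_sum_filter_not
      (Fintype.piFinset (fun k : Fin (K-1) => E k.val)) (fun γ => Contig K γ)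
      (fun γ => ∏ k : Fin (K-1), thetaNorm E W k.val (γ k).1 (γ k).2)
    unfold phiTot at hmax
    have h2 : ∑ γ ∈ (Fintype.piFinset (fun k : Fin (K-1) => E k.val)).filter
        (fun γ => ¬ Contig K γ),
        ∏ k : Fin (K-1), thetaNorm E W k.val (γ k).1 (γ k).2 = 0 := by
      rw [htotal, hmax] at hsplit
      linarith
    have hnn : ∀ x ∈ (Fintype.piFinset (fun k : Fin (K-1) => E k.val)).filter
        (fun γ => ¬ Contig K γ),
        0 ≤ ∏ k : Fin (K-1), thetaNorm E W k.val (x k).1 (x k).2 :=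
      fun x _ => Finset.prod_nonneg fun k _ => hθ0 _ _ _
    exact (Finset.sum_eq_zero_iff_of_nonneg hnn).mp h2 γ
      (Finset.mem_filter.mpr ⟨hγ, hnc⟩)
  have hex : ∀ k, k < K-1 → ∃ e ∈ E k, W k e.1 e.2 ≠ 0 := by
    intro k hk
    by_contra h
    push_neg at h
    have hz : Snorm E W k = 0 :=
      Finset.sum_eq_zero (fun e he => by rw [h e he, abs_zero])
    exact absurd hz (ne_of_gt (hS k hk))
  choose pick hpickE hpickW using hex
  have key : ∀ k : ℕ, k + 1 < K - 1 → ∀ e ∈ E k, ∀ e' ∈ E (k+1),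
      W k e.1 e.2 ≠ 0 → W (k+1) e'.1 e'.2 ≠ 0 → e.2 = e'.1 := by
    intro k hk e he e' he' hw hw'
    by_contra hne
    set γ : Fin (K-1) → ℕ × ℕ := fun l =>
      if l.val = k then e else if l.val = k+1 then e' else pick l.val l.isLt with hγdef
    have hγval : ∀ l : Fin (K-1),
        γ l = if l.val = k then e else if l.val = k+1 then e' else pick l.val l.isLt :=
      fun l => rfl
    have hγmem : γ ∈ Fintype.piFinset (fun k : Fin (K-1) => E k.val) := by
      rw [Fintype.mem_piFinset]
      intro l
      by_cases h1 : l.val = k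
      · rw [hγval l, if_pos h1, h1]; exact he
      · by_cases h2 : l.val = k + 1
        · rw [hγval l, if_neg h1, if_pos h2, h2]; exact he'
        · rw [hγval l, if_neg h1, if_neg h2]; exact hpickE l.val l.isLt
    have hγnc : ¬ Contig K γ := by
      intro hc
      have hklt : k < K - 1 := by omega
      have hcc := hc ⟨k, hklt⟩ (by simpa using hk)
      have e1 : γ ⟨k, hklt⟩ = e := by
        rw [hγval, if_pos rfl]
      have e2 : γ ⟨k+1, by simpa using hk⟩ = e' := by
        rw [hγval]
        rw [if_neg (by simp), if_pos rfl]
      rw [e1] at hcc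
      have : (γ (⟨(⟨k, hklt⟩ : Fin (K-1)).val + 1, by simpa using hk⟩ : Fin (K-1))) = e' := e2
      rw [this] at hcc
      exact hne hcc
    have hz := hzero γ hγmem hγnc
    obtain ⟨l, -, hl⟩ := Finset.prod_eq_zero_iff.mp hz
    have hW0 : W l.val (γ l).1 (γ l).2 = 0 := by
      unfold thetaNorm at hl
      rcases div_eq_zero_iff.mp hl with h | h
      · exact abs_eq_zero.mp h
      · exact absurd h (ne_of_gt (hS l.val l.isLt))
    by_cases h1 : l.val = k
    · rw [hγval l, if_pos h1, h1] at hW0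
      exact hw hW0
    · by_cases h2 : l.val = k + 1
      · rw [hγval l, if_neg h1, if_pos h2, h2] at hW0
        exact hw' hW0
      · rw [hγval l, if_neg h1, if_neg h2] at hW0
        exact hpickW l.val l.isLt hW0
  have card0 : ((E 0).filter (fun e => W 0 e.1 e.2 ≠ 0)).card ≤ n 0 := by
    have h1lt : (1:ℕ) < K - 1 := by omega
    have hsnd : ∀ e ∈ (E 0).filter (fun e => W 0 e.1 e.2 ≠ 0),
        e.2 = (pick 1 h1lt).1 := by
      intro e he
      rw [Finset.mem_filter] at he
      exact key 0 (by omega) e he.1 _ (hpickE 1 h1lt) he.2 (hpickW 1 h1lt)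
    have hmaps : ∀ e ∈ (E 0).filter (fun e => W 0 e.1 e.2 ≠ 0),
        e.1 ∈ Finset.range (n 0) := by
      intro e he
      rw [Finset.mem_filter, hE 0 (by omega), Finset.mem_product] at he
      exact he.1.1
    have hinj : Set.InjOn Prod.fst (((E 0).filter (fun e => W 0 e.1 e.2 ≠ 0) : Finset (ℕ × ℕ)) : Set (ℕ × ℕ)) := by
      intro a ha b hb hab
      exact Prod.ext hab
        ((hsnd a (Finset.mem_coe.mp ha)).trans (hsnd b (Finset.mem_coe.mp hb)).symm)
    calc ((E 0).filter (fun e => W 0 e.1 e.2 ≠ 0)).card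
        ≤ (Finset.range (n 0)).card := Finset.card_le_card_of_injOn Prod.fst hmaps hinj
      _ = n 0 := Finset.card_range _
  have cardL : ((E (K-2)).filter (fun e => W (K-2) e.1 e.2 ≠ 0)).card ≤ n (K-1) := by
    have h3lt : K - 3 < K - 1 := by omega
    have heq : K - 3 + 1 = K - 2 := by omega
    have hfst : ∀ e ∈ (E (K-2)).filter (fun e => W (K-2) e.1 e.2 ≠ 0),
        e.1 = (pick (K-3) h3lt).2 := by
      intro e he
      rw [Finset.mem_filter] at he
      exact (key (K-3) (by omega) _ (hpickE (K-3) h3lt) e (by rw [heq]; exact he.1)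
        (hpickW (K-3) h3lt) (by rw [heq]; exact he.2)).symm
    have hmaps : ∀ e ∈ (E (K-2)).filter (fun e => W (K-2) e.1 e.2 ≠ 0),
        e.2 ∈ Finset.range (n (K-1)) := by
      intro e he
      rw [Finset.mem_filter, hE (K-2) (by omega), Finset.mem_product] at he
      have := he.1.2
      rwa [show K - 2 + 1 = K - 1 by omega] at this
    have hinj : Set.InjOn Prod.snd (((E (K-2)).filter (fun e => W (K-2) e.1 e.2 ≠ 0) : Finset (ℕ × ℕ)) : Set (ℕ × ℕ)) := by
      intro a ha b hb hab
      exact Prod.ext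
        ((hfst a (Finset.mem_coe.mp ha)).trans (hfst b (Finset.mem_coe.mp hb)).symm) hab
    calc ((E (K-2)).filter (fun e => W (K-2) e.1 e.2 ≠ 0)).card
        ≤ (Finset.range (n (K-1))).card := Finset.card_le_card_of_injOn Prod.snd hmaps hinj
      _ = n (K-1) := Finset.card_range _
  have cardM : ∀ k, 0 < k → k < K - 2 →
      ((E k).filter (fun e => W k e.1 e.2 ≠ 0)).card ≤ 1 := by
    intro k hk0 hk2
    have hprev : k - 1 < K - 1 := by omega
    have hnext : k + 1 < K - 1 := by omega
    have heq : k - 1 + 1 = k := by omega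
    have hfst : ∀ e ∈ (E k).filter (fun e => W k e.1 e.2 ≠ 0),
        e.1 = (pick (k-1) hprev).2 := by
      intro e he
      rw [Finset.mem_filter] at he
      exact (key (k-1) (by omega) _ (hpickE (k-1) hprev) e (by rw [heq]; exact he.1)
        (hpickW (k-1) hprev) (by rw [heq]; exact he.2)).symm
    have hsnd : ∀ e ∈ (E k).filter (fun e => W k e.1 e.2 ≠ 0),
        e.2 = (pick (k+1) hnext).1 := by
      intro e he
      rw [Finset.mem_filter] at he
      exact key k hnext e he.1 _ (hpickE (k+1) hnext) he.2 (hpickW (k+1) hnext)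
    apply Finset.card_le_one.mpr
    intro a ha b hb
    exact Prod.ext ((hfst a ha).trans (hfst b hb).symm)
      ((hsnd a ha).trans (hsnd b hb).symm)
  have hbound : ∀ k ∈ Finset.range (K-1),
      ((E k).filter (fun e => W k e.1 e.2 ≠ 0)).card
        ≤ (if k = 0 then n 0 else if k = K-2 then n (K-1) else 1) := by
    intro k hk
    rw [Finset.mem_range] at hk
    by_cases h0 : k = 0
    · subst h0; simpa using card0
    · by_cases hL : k = K - 2
      · subst hL; rw [if_neg h0, if_pos rfl]; exact cardL
      · rw [if_neg h0, if_neg hL]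
        exact cardM k (by omega) (by omega)
  calc ∑ k ∈ Finset.range (K-1), ((E k).filter (fun e => W k e.1 e.2 ≠ 0)).card
      ≤ ∑ k ∈ Finset.range (K-1),
          (if k = 0 then n 0 else if k = K-2 then n (K-1) else 1) :=
        Finset.sum_le_sum hbound
    _ = n 0 + n (K-1) + (K - 3) := by
        rw [show K - 1 = (K-3)+2 by omega, show K - 2 = (K-3)+1 by omega]
        exact aux_sum_iv _ _ _
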